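/- For every nonzero ideal I of S there exists a unique reduced Gröbner base for I: there is a Gröbner base G for I such that every g ∈ G is monic and for any two distinct g, h ∈ G the leading monomial lm(g) does not divide any term of h, and any two Gröbner bases for I with these properties are equal. -/

import Mathlib

open MvPolynomial

noncomputable section

/-- `r` is a monomial order on the monomials (finitely supported exponent vectors):
a well-order compatible with multiplication.  Here `r a b` means `x^a < x^b`. -/
def IsMonomialOrder {σ : Type*} (r : (σ →₀ ℕ) → (σ →₀ ℕ) → Prop) : Prop :=
  IsWellOrder (σ →₀ ℕ) r ∧ ∀ a b c : σ →₀ ℕ, r a b → r (c + a) (c + b)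

/-- `m` is the leading monomial of the polynomial `f` with respect to the order `r`. -/
def IsLM {σ k : Type*} [CommSemiring k] (r : (σ →₀ ℕ) → (σ →₀ ℕ) → Prop)
    (f : MvPolynomial σ k) (m : σ →₀ ℕ) : Prop :=
  m ∈ f.support ∧ ∀ m' ∈ f.support, m' ≠ m → r m' m

/-- `t` is the leading term of `f` with respect to `r`. -/
def IsLT {σ k : Type*} [CommSemiring k] (r : (σ →₀ ℕ) → (σ →₀ ℕ) → Prop)
    (f t : MvPolynomial σ k) : Prop :=
  ∃ m, IsLM r f m ∧ t = monomial m (f.coeff m)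

/-- The initial ideal of `I`: the ideal generated by the leading terms of nonzero elements. -/
def initialIdeal {σ k : Type*} [CommSemiring k] (r : (σ →₀ ℕ) → (σ →₀ ℕ) → Prop)
    (I : Ideal (MvPolynomial σ k)) : Ideal (MvPolynomial σ k) :=
  Ideal.span {t | ∃ f ∈ I, f ≠ 0 ∧ IsLT r f t}

/-- The set of leading monomials (as polynomials) of the nonzero members of `G`: `in(G)`. -/
def lmMonomials {σ k : Type*} [CommSemiring k] (r : (σ →₀ ℕ) → (σ →₀ ℕ) → Prop)
    (G : Set (MvPolynomial σ k)) : Set (MvPolynomial σ k) :=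
  {t | ∃ m, (∃ g ∈ G, g ≠ 0 ∧ IsLM r g m) ∧ t = monomial m 1}

/-- `G ⊆ I` is a Gröbner base for `I`: the leading monomials of members of `G`
generate the initial ideal of `I`. -/
def IsGroebnerBasis {σ k : Type*} [CommSemiring k] (r : (σ →₀ ℕ) → (σ →₀ ℕ) → Prop)
    (G : Set (MvPolynomial σ k)) (I : Ideal (MvPolynomial σ k)) : Prop :=
  G ⊆ ↑I ∧ Ideal.span (lmMonomials r G) = initialIdeal r I

/-- `S⟨n⟩ = k[x₀, …, xₙ₋₁]`, the subalgebra of polynomials in the first `n` variables. -/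
def Sn (k : Type*) [CommSemiring k] (n : ℕ) : Subalgebra k (MvPolynomial ℕ k) :=
  MvPolynomial.supported k {i | i < n}

/-- The initial ideal of an ideal `J` of `S⟨n⟩`, computed inside `S⟨n⟩`
(with the restricted monomial order). -/
def initialIdealIn {k : Type*} [CommSemiring k] (r : (ℕ →₀ ℕ) → (ℕ →₀ ℕ) → Prop)
    (n : ℕ) (J : Ideal ↥(Sn k n)) : Ideal ↥(Sn k n) :=
  Ideal.span {t | ∃ f ∈ J, f ≠ 0 ∧ IsLT r (f : MvPolynomial ℕ k) (t : MvPolynomial ℕ k)}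

/-- The ideal `I ∩ S⟨n⟩` of `S⟨n⟩`. -/
def interIdeal {k : Type*} [CommSemiring k] (I : Ideal (MvPolynomial ℕ k)) (n : ℕ) :
    Ideal ↥(Sn k n) :=
  Ideal.comap (Sn k n).subtype I

/-- A subset `G` of `S` lying in `S⟨n⟩` is a Gröbner base for the ideal `J` of `S⟨n⟩`. -/
def IsGroebnerBasisIn {k : Type*} [CommSemiring k] (r : (ℕ →₀ ℕ) → (ℕ →₀ ℕ) → Prop)
    (n : ℕ) (G : Set (MvPolynomial ℕ k)) (J : Ideal ↥(Sn k n)) : Prop :=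
  (∀ g ∈ G, ∃ hg : g ∈ Sn k n, (⟨g, hg⟩ : ↥(Sn k n)) ∈ J) ∧
  Ideal.span {t : ↥(Sn k n) | ∃ m, (∃ g ∈ G, g ≠ 0 ∧ IsLM r g m) ∧
      (t : MvPolynomial ℕ k) = monomial m 1} = initialIdealIn r n J

/-- `f'` is a remainder of `f` on division by `G` with respect to the order `r`. -/
def IsRemainder {σ k : Type*} [CommSemiring k] (r : (σ →₀ ℕ) → (σ →₀ ℕ) → Prop)
    (G : Set (MvPolynomial σ k)) (f f' : MvPolynomial σ k) : Prop :=
  (∃ (s : ℕ) (g q : Fin s → MvPolynomial σ k),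
    (∀ i, g i ∈ G) ∧
    f = (∑ i, q i * g i) + f' ∧
    ∀ i, q i * g i ≠ 0 → ∀ m m', IsLM r (q i * g i) m → IsLM r f m' → m = m' ∨ r m m') ∧
  ∀ m ∈ f'.support, (monomial m 1 : MvPolynomial σ k) ∉ Ideal.span (lmMonomials r G)

/-- `G` is a reduced Gröbner base for `I`: every member is monic and no leading monomial
of a member divides any term of another member. -/
def IsReducedGB {σ k : Type*} [CommSemiring k] (r : (σ →₀ ℕ) → (σ →₀ ℕ) → Prop)
    (G : Set (MvPolynomial σ k)) (I : Ideal (MvPolynomial σ k)) : Prop :=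
  IsGroebnerBasis r G I ∧
  (∀ g ∈ G, ∃ m, IsLM r g m ∧ MvPolynomial.coeff m g = 1) ∧
  (∀ g ∈ G, ∀ h ∈ G, g ≠ h → ∀ m, IsLM r g m → ∀ m' ∈ h.support, ¬ m ≤ m')

/-- A regular sequence indexed by an ordered set `(Ω, lt)`. -/
def IsRegularSeq {R : Type*} [CommRing R] {Ω : Type*} (lt : Ω → Ω → Prop) (f : Ω → R) : Prop :=
  Ideal.span (Set.range f) ≠ ⊤ ∧
  ∀ α : Ω, ∀ h : R, h * f α ∈ Ideal.span (f '' {β | lt β α}) →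
    h ∈ Ideal.span (f '' {β | lt β α})

/-- The FR-condition: every finite strictly increasing subfamily is a regular sequence
in this order. -/
def SatisfiesFR {R : Type*} [CommRing R] {Ω : Type*} (lt : Ω → Ω → Prop) (f : Ω → R) : Prop :=
  ∀ (n : ℕ) (α : Fin n → Ω), (∀ i j : Fin n, i < j → lt (α i) (α j)) →
    IsRegularSeq (· < ·) (fun i => f (α i))

namespace GBAux

variable {r : (ℕ →₀ ℕ) → (ℕ →₀ ℕ) → Prop}

lemma rtrans (hr : IsMonomialOrder r) {a b c} (h1 : r a b) (h2 : r b c) : r a c :=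
  haveI := hr.1; Trans.simple h1 h2

lemma rwf (hr : IsMonomialOrder r) : WellFounded r := hr.1.toIsWellFounded.wf

lemma rasymm (hr : IsMonomialOrder r) {a b} (h1 : r a b) : ¬ r b a :=
  (rwf hr).asymmetric a b h1

lemma rtrich (hr : IsMonomialOrder r) (a b) : r a b ∨ a = b ∨ r b a :=
  haveI := hr.1; Std.Trichotomous.rel_or_eq_or_rel_swap

lemma r_zero (hr : IsMonomialOrder r) {m : ℕ →₀ ℕ} (hm : m ≠ 0) : r 0 m := by
  rcases rtrich hr 0 m with h | h | h
  · exact h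
  · exact absurd h.symm hm
  · exfalso
    obtain ⟨n, hn1, hn2⟩ := (rwf hr).has_min (Set.range fun n : ℕ => n • m) ⟨m, 1, one_smul _ _⟩
    obtain ⟨j, rfl⟩ := hn1
    refine hn2 ((j+1) • m) ⟨j+1, rfl⟩ ?_
    have := hr.2 m 0 (j • m) h
    simpa [succ_nsmul] using this

lemma r_of_le (hr : IsMonomialOrder r) {a b : ℕ →₀ ℕ} (hab : a ≤ b) (hne : a ≠ b) : r a b := by
  obtain ⟨d, rfl⟩ := le_iff_exists_add.mp hab
  have hd : d ≠ 0 := by rintro rfl; simp at hne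
  have := hr.2 0 d a (r_zero hr hd)
  simpa using this

lemma exists_rmax (hr : IsMonomialOrder r) (s : Finset (ℕ →₀ ℕ)) (hs : s.Nonempty) :
    ∃ m ∈ s, ∀ m' ∈ s, m' ≠ m → r m' m := by
  classical
  induction s using Finset.induction_on with
  | empty => exact absurd hs (by simp)
  | @insert a s' ha ih =>
    by_cases hse : s'.Nonempty
    · obtain ⟨m, hm, hmax⟩ := ih hse
      rcases rtrich hr a m with h | h | h
      · refine ⟨m, by simp [hm], ?_⟩
        intro m' hm' hne
        rcases Finset.mem_insert.mp hm' with rfl | hm'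
        · exact h
        · exact hmax m' hm' hne
      · subst h
        refine ⟨a, by simp, ?_⟩
        intro m' hm' hne
        rcases Finset.mem_insert.mp hm' with rfl | hm'
        · exact absurd rfl hne
        · exact hmax m' hm' hne
      · refine ⟨a, by simp, ?_⟩
        intro m' hm' hne
        rcases Finset.mem_insert.mp hm' with rfl | hm'
        · exact absurd rfl hne
        · by_cases hm'm : m' = m
          · exact hm'm ▸ h
          · exact rtrans hr (hmax m' hm' hm'm) h
    · rw [Finset.not_nonempty_iff_eq_empty] at hse
      subst hse
      exact ⟨a, by simp, by intro m' hm' hne; simp at hm'; exact absurd hm' hne⟩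

lemma exists_isLM (hr : IsMonomialOrder r) {k : Type*} [CommSemiring k]
    {f : MvPolynomial ℕ k} (hf : f ≠ 0) : ∃ m, IsLM r f m := by
  obtain ⟨m, hm, hmax⟩ := exists_rmax hr f.support (support_nonempty.mpr hf)
  exact ⟨m, hm, hmax⟩

lemma isLM_unique (hr : IsMonomialOrder r) {k : Type*} [CommSemiring k]
    {f : MvPolynomial ℕ k} {m m' : ℕ →₀ ℕ} (h : IsLM r f m) (h' : IsLM r f m') : m = m' := by
  by_contra hne
  exact rasymm hr (h'.2 m h.1 hne) (h.2 m' h'.1 (Ne.symm hne))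


section Field
variable {k : Type*} [Field k]

/-- set of leading monomials of nonzero elements of a set -/
def lms (r : (ℕ →₀ ℕ) → (ℕ →₀ ℕ) → Prop) (G : Set (MvPolynomial ℕ k)) : Set (ℕ →₀ ℕ) :=
  {m | ∃ g ∈ G, g ≠ 0 ∧ IsLM r g m}

lemma lmMonomials_eq (G : Set (MvPolynomial ℕ k)) :
    lmMonomials r G = (fun m => (monomial m (1 : k))) '' lms r G := by
  ext t
  simp only [lmMonomials, lms, Set.mem_setOf_eq, Set.mem_image]
  constructor
  · rintro ⟨m, h1, rfl⟩; exact ⟨m, h1, rfl⟩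
  · rintro ⟨m, h1, rfl⟩; exact ⟨m, h1, rfl⟩

lemma initialIdeal_eq_span (I : Ideal (MvPolynomial ℕ k)) :
    initialIdeal r I = Ideal.span ((fun m => (monomial m (1 : k))) '' lms r (I : Set (MvPolynomial ℕ k))) := by
  unfold initialIdeal
  apply le_antisymm
  · rw [Ideal.span_le]
    rintro t ⟨f, hfI, hf0, m, hlm, rfl⟩
    have : (monomial m (f.coeff m) : MvPolynomial ℕ k) = C (f.coeff m) * monomial m 1 := by
      rw [C_mul_monomial, mul_one]
    rw [this]
    exact Ideal.mul_mem_left _ _ (Ideal.subset_span ⟨m, ⟨f, hfI, hf0, hlm⟩, rfl⟩)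
  · rw [Ideal.span_le]
    rintro t ⟨m, ⟨f, hfI, hf0, hlm⟩, rfl⟩
    have hc : f.coeff m ≠ 0 := mem_support_iff.mp hlm.1
    have : (monomial m (1 : k)) = C (f.coeff m)⁻¹ * monomial m (f.coeff m) := by
      rw [C_mul_monomial, inv_mul_cancel₀ hc]
    show (monomial m (1:k)) ∈ _
    rw [this]
    exact Ideal.mul_mem_left _ _ (Ideal.subset_span ⟨f, hfI, hf0, m, hlm, rfl⟩)

lemma monomial_mem_span_monomials_iff {L : Set (ℕ →₀ ℕ)} {m : ℕ →₀ ℕ} :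
    (monomial m (1 : k)) ∈ Ideal.span ((fun m => (monomial m (1 : k))) '' L) ↔
      ∃ m₀ ∈ L, m₀ ≤ m := by
  classical
  rw [mem_ideal_span_monomial_image]
  constructor
  · intro h
    exact h m (by simp [support_monomial])
  · intro h m' hm'
    rw [support_monomial, if_neg (one_ne_zero)] at hm'
    simp only [Finset.mem_singleton] at hm'
    subst hm'
    exact h

lemma monomial_mem_initialIdeal_iff {I : Ideal (MvPolynomial ℕ k)} {m : ℕ →₀ ℕ} :
    (monomial m (1 : k)) ∈ initialIdeal r I ↔ ∃ m₀ ∈ lms r (I : Set (MvPolynomial ℕ k)), m₀ ≤ m := by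
  rw [initialIdeal_eq_span, monomial_mem_span_monomials_iff]

lemma monomial_mem_span_lmMonomials_iff {G : Set (MvPolynomial ℕ k)} {m : ℕ →₀ ℕ} :
    (monomial m (1 : k)) ∈ Ideal.span (lmMonomials r G) ↔ ∃ m₀ ∈ lms r G, m₀ ≤ m := by
  rw [lmMonomials_eq, monomial_mem_span_monomials_iff]


lemma exists_nf (hr : IsMonomialOrder r) (I : Ideal (MvPolynomial ℕ k)) (f : MvPolynomial ℕ k) :
    ∃ f', f - f' ∈ I ∧ ∀ m ∈ f'.support, (monomial m (1 : k)) ∉ initialIdeal r I := by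
  classical
  set Bad : MvPolynomial ℕ k → Finset (ℕ →₀ ℕ) :=
    fun f => f.support.filter (fun m => (monomial m (1 : k)) ∈ initialIdeal r I) with hBad
  have key : ∀ m : ℕ →₀ ℕ, ∀ f : MvPolynomial ℕ k,
      (∀ m' ∈ Bad f, m' = m ∨ r m' m) →
      ∃ f', f - f' ∈ I ∧ ∀ m ∈ f'.support, (monomial m (1 : k)) ∉ initialIdeal r I := by
    intro m
    refine (rwf hr).induction
      (C := fun m => ∀ f : MvPolynomial ℕ k,
        (∀ m' ∈ Bad f, m' = m ∨ r m' m) →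
        ∃ f', f - f' ∈ I ∧ ∀ m ∈ f'.support, (monomial m (1 : k)) ∉ initialIdeal r I)
      m ?_
    clear m
    intro m ih f hbound
    by_cases hB : (Bad f).Nonempty
    swap
    · refine ⟨f, by simp, ?_⟩
      intro m' hm' hmem
      exact hB ⟨m', Finset.mem_filter.mpr ⟨hm', hmem⟩⟩
    obtain ⟨ms, hmsB, hmax⟩ := exists_rmax hr _ hB
    rcases hbound ms hmsB with rfl | hlt
    swap
    · -- max of Bad f is strictly below m : apply ih directly
      refine ih ms hlt f ?_
      intro m' hm'
      by_cases h : m' = ms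
      · exact Or.inl h
      · exact Or.inr (hmax m' hm' h)
    · -- ms = m : one reduction step
      have hmem : (monomial ms (1 : k)) ∈ initialIdeal r I := (Finset.mem_filter.mp hmsB).2
      have hsup : ms ∈ f.support := (Finset.mem_filter.mp hmsB).1
      obtain ⟨m₀, hm₀L, hle⟩ := monomial_mem_initialIdeal_iff.mp hmem
      obtain ⟨h, hhI, hh0, hlmh⟩ := hm₀L
      have hlc : h.coeff m₀ ≠ 0 := mem_support_iff.mp hlmh.1
      set d : ℕ →₀ ℕ := ms - m₀ with hd
      have hdm : d + m₀ = ms := by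
        rw [add_comm]; exact add_tsub_cancel_of_le hle
      set c : k := f.coeff ms / h.coeff m₀ with hc
      set u : MvPolynomial ℕ k := monomial d c * h with hu
      have huI : u ∈ I := Ideal.mul_mem_left _ _ hhI
      have hum : u.coeff ms = f.coeff ms := by
        have h1 : u.coeff (d + m₀) = c * h.coeff m₀ := coeff_monomial_mul _ _ _ _
        rw [hdm] at h1
        rw [h1, hc, div_mul_cancel₀ _ hlc]
      set f₁ : MvPolynomial ℕ k := f - u with hf₁
      have hcm : f₁.coeff ms = 0 := by
        rw [hf₁, coeff_sub, hum, sub_self]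
      have husup : ∀ m'' ∈ u.support, m'' = ms ∨ r m'' ms := by
        intro m'' hm''
        have hcoeff : u.coeff m'' ≠ 0 := mem_support_iff.mp hm''
        rw [hu, coeff_monomial_mul'] at hcoeff
        by_cases hdle : d ≤ m''
        · rw [if_pos hdle] at hcoeff
          have h1 : (m'' - d) ∈ h.support := by
            rw [mem_support_iff]
            intro h0
            rw [h0, mul_zero] at hcoeff
            exact hcoeff rfl
          have h2 : d + (m'' - d) = m'' := by
            rw [add_comm]; exact tsub_add_cancel_of_le hdle
          by_cases hm0 : m'' - d = m₀
          · left; rw [← h2, hm0, hdm]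
          · right
            have := hr.2 (m'' - d) m₀ d (hlmh.2 _ h1 hm0)
            rwa [h2, hdm] at this
        · rw [if_neg hdle] at hcoeff
          exact absurd rfl hcoeff
      have hbound1 : ∀ m' ∈ Bad f₁, r m' ms := by
        intro m' hm'
        obtain ⟨hm'sup, hm'bad⟩ := Finset.mem_filter.mp hm'
        have hm'ne : m' ≠ ms := by
          intro h0
          exact mem_support_iff.mp hm'sup (h0 ▸ hcm)
        have : m' ∈ f.support ∨ m' ∈ u.support := by
          by_contra h0
          push_neg at h0
          have h1 := notMem_support_iff.mp h0.1
          have h2 := notMem_support_iff.mp h0.2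
          exact mem_support_iff.mp hm'sup (by rw [hf₁, coeff_sub, h1, h2, sub_self])
        rcases this with h0 | h0
        · rcases hbound m' (Finset.mem_filter.mpr ⟨h0, hm'bad⟩) with h1 | h1
          · exact absurd h1 hm'ne
          · exact h1
        · rcases husup m' h0 with h1 | h1
          · exact absurd h1 hm'ne
          · exact h1
      by_cases hB1 : (Bad f₁).Nonempty
      · obtain ⟨m₁, hm₁B, hmax₁⟩ := exists_rmax hr _ hB1
        obtain ⟨f'', h1, h2⟩ := ih m₁ (hbound1 m₁ hm₁B) f₁ (fun m' hm' => by
          by_cases h : m' = m₁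
          · exact Or.inl h
          · exact Or.inr (hmax₁ m' hm' h))
        refine ⟨f'', ?_, h2⟩
        have : f - f'' = u + (f₁ - f'') := by rw [hf₁]; ring
        rw [this]
        exact Ideal.add_mem _ huI h1
      · refine ⟨f₁, by rw [hf₁]; simpa using huI, ?_⟩
        intro m' hm' hmem'
        exact hB1 ⟨m', Finset.mem_filter.mpr ⟨hm', hmem'⟩⟩
  by_cases hB : (Bad f).Nonempty
  · obtain ⟨m, hm, hmax⟩ := exists_rmax hr _ hB
    exact key m f (fun m' hm' => by
      by_cases h : m' = m
      · exact Or.inl h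
      · exact Or.inr (hmax m' hm' h))
  · refine ⟨f, by simp, ?_⟩
    intro m' hm' hmem
    exact hB ⟨m', Finset.mem_filter.mpr ⟨hm', hmem⟩⟩


def minset (r : (ℕ →₀ ℕ) → (ℕ →₀ ℕ) → Prop) (I : Ideal (MvPolynomial ℕ k)) : Set (ℕ →₀ ℕ) :=
  {m | m ∈ lms r (I : Set (MvPolynomial ℕ k)) ∧
    ∀ m₀ ∈ lms r (I : Set (MvPolynomial ℕ k)), m₀ ≤ m → m₀ = m}

lemma exists_minset_le {I : Ideal (MvPolynomial ℕ k)} {m : ℕ →₀ ℕ}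
    (hm : m ∈ lms r (I : Set (MvPolynomial ℕ k))) : ∃ m₀ ∈ minset r I, m₀ ≤ m := by
  obtain ⟨m₀, hm₀, hmin⟩ := (wellFounded_lt (α := ℕ →₀ ℕ)).has_min
    {m' | m' ∈ lms r (I : Set (MvPolynomial ℕ k)) ∧ m' ≤ m} ⟨m, hm, le_rfl⟩
  refine ⟨m₀, ⟨hm₀.1, ?_⟩, hm₀.2⟩
  intro m₁ h1 h2
  by_contra hne
  exact hmin m₁ ⟨h1, h2.trans hm₀.2⟩ (lt_of_le_of_ne h2 hne)

lemma lm_mem_lms {I : Ideal (MvPolynomial ℕ k)} {g : MvPolynomial ℕ k} {m : ℕ →₀ ℕ}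
    (hgI : g ∈ I) (hg0 : g ≠ 0) (hlm : IsLM r g m) :
    m ∈ lms r (I : Set (MvPolynomial ℕ k)) := ⟨g, hgI, hg0, hlm⟩

theorem exists_reducedGB (hr : IsMonomialOrder r) (I : Ideal (MvPolynomial ℕ k)) :
    ∃ G : Set (MvPolynomial ℕ k), IsReducedGB r G I := by
  classical
  set nf : (ℕ →₀ ℕ) → MvPolynomial ℕ k :=
    fun m => Classical.choose (exists_nf hr I (monomial m 1)) with hnf
  have hnf1 : ∀ m, (monomial m (1 : k)) - nf m ∈ I :=
    fun m => (Classical.choose_spec (exists_nf hr I (monomial m 1))).1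
  have hnf2 : ∀ m, ∀ m' ∈ (nf m).support, (monomial m' (1 : k)) ∉ initialIdeal r I :=
    fun m => (Classical.choose_spec (exists_nf hr I (monomial m 1))).2
  set gm : (ℕ →₀ ℕ) → MvPolynomial ℕ k := fun m => (monomial m (1 : k)) - nf m with hgm
  set G : Set (MvPolynomial ℕ k) := gm '' minset r I with hG
  -- basic facts about gm for m ∈ minset
  have hbad : ∀ m ∈ minset r I, (monomial m (1 : k)) ∈ initialIdeal r I := by
    intro m hm
    exact monomial_mem_initialIdeal_iff.mpr ⟨m, hm.1, le_rfl⟩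
  have hnotnf : ∀ m ∈ minset r I, m ∉ (nf m).support := by
    intro m hm hmem
    exact hnf2 m m hmem (hbad m hm)
  have hcoeff : ∀ m ∈ minset r I, (gm m).coeff m = 1 := by
    intro m hm
    rw [hgm]
    rw [coeff_sub, coeff_monomial, if_pos rfl, notMem_support_iff.mp (hnotnf m hm), sub_zero]
  have hne0 : ∀ m ∈ minset r I, gm m ≠ 0 := by
    intro m hm h0
    have := hcoeff m hm
    rw [h0] at this
    simp at this
  have hgmI : ∀ m, gm m ∈ I := fun m => hnf1 m
  have hsupsub : ∀ m, (gm m).support ⊆ insert m (nf m).support := by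
    intro m m' hm'
    have := support_sub (σ := ℕ) (monomial m (1 : k)) (nf m) hm'
    rw [Finset.mem_union, support_monomial, if_neg (one_ne_zero)] at this
    rcases this with h | h
    · simp only [Finset.mem_singleton] at h; exact Finset.mem_insert.mpr (Or.inl h)
    · exact Finset.mem_insert.mpr (Or.inr h)
  have hlm : ∀ m ∈ minset r I, IsLM r (gm m) m := by
    intro m hm
    obtain ⟨m₂, hm₂⟩ := exists_isLM hr (hne0 m hm)
    have hm₂m : m₂ = m := by
      by_contra hne
      have h1 : m₂ ∈ (nf m).support := by
        rcases Finset.mem_insert.mp (hsupsub m hm₂.1) with h | h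
        · exact absurd h hne
        · exact h
      exact hnf2 m m₂ h1
        (monomial_mem_initialIdeal_iff.mpr
          ⟨m₂, lm_mem_lms (hgmI m) (hne0 m hm) hm₂, le_rfl⟩)
    exact hm₂m ▸ hm₂
  -- lms of G is minset
  have hlmsG : lms r G = minset r I := by
    ext m'
    constructor
    · rintro ⟨g, ⟨m, hm, rfl⟩, hg0, hlmg⟩
      exact (isLM_unique hr hlmg (hlm m hm)) ▸ hm
    · intro hm
      exact ⟨gm m', ⟨m', hm, rfl⟩, hne0 m' hm, hlm m' hm⟩
  refine ⟨G, ⟨?_, ?_⟩, ?_, ?_⟩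
  · rintro g ⟨m, hm, rfl⟩
    exact hgmI m
  · rw [lmMonomials_eq, hlmsG, initialIdeal_eq_span]
    apply le_antisymm
    · exact Ideal.span_mono (Set.image_mono (fun m hm => hm.1))
    · rw [Ideal.span_le]
      rintro t ⟨m, hm, rfl⟩
      obtain ⟨m₀, hm₀, hle⟩ := exists_minset_le hm
      have : (monomial m (1 : k)) = monomial (m - m₀) 1 * monomial m₀ 1 := by
        rw [monomial_mul, one_mul, tsub_add_cancel_of_le hle]
      show (monomial m (1 : k)) ∈ _
      rw [this]
      exact Ideal.mul_mem_left _ _ (Ideal.subset_span ⟨m₀, hm₀, rfl⟩)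
  · rintro g ⟨m, hm, rfl⟩
    exact ⟨m, hlm m hm, hcoeff m hm⟩
  · rintro g ⟨m₁, hm₁, rfl⟩ h ⟨m₂, hm₂, rfl⟩ hne m' hlm' m'' hm''
    have hm'm₁ : m' = m₁ := isLM_unique hr hlm' (hlm m₁ hm₁)
    subst hm'm₁
    have hMne : m' ≠ m₂ := fun h0 => hne (h0 ▸ rfl)
    intro hle
    rcases Finset.mem_insert.mp (hsupsub m₂ hm'') with h0 | h0
    · subst h0
      exact hMne (hm₂.2 m' hm₁.1 hle)
    · exact hnf2 m₂ m'' h0 (monomial_mem_initialIdeal_iff.mpr ⟨m', hm₁.1, hle⟩)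


lemma reduced_ne_zero {G : Set (MvPolynomial ℕ k)} {I : Ideal (MvPolynomial ℕ k)}
    (hG : IsReducedGB r G I) {g : MvPolynomial ℕ k} (hg : g ∈ G) : g ≠ 0 := by
  obtain ⟨m, _, hc⟩ := hG.2.1 g hg
  intro h0
  rw [h0] at hc
  simp at hc

lemma reduced_lms_eq_minset (hr : IsMonomialOrder r) {G : Set (MvPolynomial ℕ k)}
    {I : Ideal (MvPolynomial ℕ k)} (hG : IsReducedGB r G I) :
    lms r G = minset r I := by
  have hspan : Ideal.span (lmMonomials r G) = initialIdeal r I := hG.1.2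
  ext m
  constructor
  · rintro ⟨g, hgG, hg0, hlmg⟩
    have hmI : m ∈ lms r (I : Set (MvPolynomial ℕ k)) := lm_mem_lms (hG.1.1 hgG) hg0 hlmg
    refine ⟨hmI, ?_⟩
    intro m₀ hm₀ hle
    have h1 : (monomial m₀ (1 : k)) ∈ Ideal.span (lmMonomials r G) := by
      rw [hspan]
      exact monomial_mem_initialIdeal_iff.mpr ⟨m₀, hm₀, le_rfl⟩
    obtain ⟨m₁, ⟨g₁, hg₁G, hg₁0, hlm₁⟩, hle₁⟩ := monomial_mem_span_lmMonomials_iff.mp h1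
    have hg₁g : g₁ = g := by
      by_contra hne
      exact hG.2.2 g₁ hg₁G g hgG hne m₁ hlm₁ m hlmg.1 (hle₁.trans hle)
    subst hg₁g
    have : m₁ = m := isLM_unique hr hlm₁ hlmg
    subst this
    exact le_antisymm hle hle₁
  · intro hm
    have h1 : (monomial m (1 : k)) ∈ Ideal.span (lmMonomials r G) := by
      rw [hspan]
      exact monomial_mem_initialIdeal_iff.mpr ⟨m, hm.1, le_rfl⟩
    obtain ⟨m₁, hm₁G, hle₁⟩ := monomial_mem_span_lmMonomials_iff.mp h1
    obtain ⟨g₁, hg₁G, hg₁0, hlm₁⟩ := hm₁G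
    have hm₁I : m₁ ∈ lms r (I : Set (MvPolynomial ℕ k)) := lm_mem_lms (hG.1.1 hg₁G) hg₁0 hlm₁
    have : m₁ = m := hm.2 m₁ hm₁I hle₁
    subst this
    exact ⟨g₁, hg₁G, hg₁0, hlm₁⟩

lemma reduced_support_nonbad (hr : IsMonomialOrder r) {G : Set (MvPolynomial ℕ k)}
    {I : Ideal (MvPolynomial ℕ k)} (hG : IsReducedGB r G I) {g : MvPolynomial ℕ k}
    (hg : g ∈ G) {m : ℕ →₀ ℕ} (hlm : IsLM r g m) {m₂ : ℕ →₀ ℕ}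
    (hm₂ : m₂ ∈ g.support) (hne : m₂ ≠ m) :
    (monomial m₂ (1 : k)) ∉ initialIdeal r I := by
  intro hmem
  have h1 : (monomial m₂ (1 : k)) ∈ Ideal.span (lmMonomials r G) := by
    rw [hG.1.2]; exact hmem
  obtain ⟨m₁, ⟨g₁, hg₁G, hg₁0, hlm₁⟩, hle₁⟩ := monomial_mem_span_lmMonomials_iff.mp h1
  have hg₁g : g₁ = g := by
    by_contra hneg
    exact hG.2.2 g₁ hg₁G g hg hneg m₁ hlm₁ m₂ hm₂ hle₁
  subst hg₁g
  have hm₁m : m₁ = m := isLM_unique hr hlm₁ hlm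
  subst hm₁m
  exact rasymm hr (hlm.2 m₂ hm₂ hne) (r_of_le hr hle₁ (fun h => hne h.symm))

theorem reducedGB_unique (hr : IsMonomialOrder r) {G₁ G₂ : Set (MvPolynomial ℕ k)}
    {I : Ideal (MvPolynomial ℕ k)} (h₁ : IsReducedGB r G₁ I) (h₂ : IsReducedGB r G₂ I) :
    G₁ = G₂ := by
  have key : ∀ (A B : Set (MvPolynomial ℕ k)), IsReducedGB r A I → IsReducedGB r B I →
      A ⊆ B := by
    intro A B hA hB g hg
    have hg0 : g ≠ 0 := reduced_ne_zero hA hg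
    obtain ⟨m, hlmg⟩ := exists_isLM hr hg0
    have hmA : m ∈ lms r A := ⟨g, hg, hg0, hlmg⟩
    have hmB : m ∈ lms r B := by
      rw [reduced_lms_eq_minset hr hB, ← reduced_lms_eq_minset hr hA]; exact hmA
    obtain ⟨h, hhB, hh0, hlmh⟩ := hmB
    suffices hgh : g = h by rw [hgh]; exact hhB
    have hcg : g.coeff m = 1 := by
      obtain ⟨m', hlm', hc⟩ := hA.2.1 g hg
      rwa [isLM_unique hr hlm' hlmg] at hc
    have hch : h.coeff m = 1 := by
      obtain ⟨m', hlm', hc⟩ := hB.2.1 h hhB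
      rwa [isLM_unique hr hlm' hlmh] at hc
    by_contra hne
    have hf0 : g - h ≠ 0 := fun h0 => hne (sub_eq_zero.mp h0)
    have hfI : g - h ∈ I := Ideal.sub_mem _ (hA.1.1 hg) (hB.1.1 hhB)
    obtain ⟨m₂, hlmf⟩ := exists_isLM hr hf0
    have hm₂bad : (monomial m₂ (1 : k)) ∈ initialIdeal r I :=
      monomial_mem_initialIdeal_iff.mpr ⟨m₂, lm_mem_lms hfI hf0 hlmf, le_rfl⟩
    have hm₂m : m₂ ≠ m := by
      intro h0
      have := mem_support_iff.mp hlmf.1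
      rw [h0, coeff_sub, hcg, hch, sub_self] at this
      exact this rfl
    have : m₂ ∈ g.support ∨ m₂ ∈ h.support := by
      by_contra h0
      push_neg at h0
      have := mem_support_iff.mp hlmf.1
      rw [coeff_sub, notMem_support_iff.mp h0.1, notMem_support_iff.mp h0.2, sub_self] at this
      exact this rfl
    rcases this with h0 | h0
    · exact reduced_support_nonbad hr hA hg hlmg h0 hm₂m hm₂bad
    · exact reduced_support_nonbad hr hB hhB hlmh h0 hm₂m hm₂bad
  exact Set.Subset.antisymm (key G₁ G₂ h₁ h₂) (key G₂ G₁ h₂ h₁)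

end Field
end GBAux

/-- Proposition 1.11: every nonzero ideal of `S = k[x₁,x₂,…]` has a unique reduced
Gröbner base. -/
theorem existsUnique_reducedGB {k : Type*} [Field k]
    (r : (ℕ →₀ ℕ) → (ℕ →₀ ℕ) → Prop) (hr : IsMonomialOrder r)
    (I : Ideal (MvPolynomial ℕ k)) (hI : I ≠ ⊥) :
    ∃! G : Set (MvPolynomial ℕ k), IsReducedGB r G I := by
  obtain ⟨G, hG⟩ := GBAux.exists_reducedGB hr I
  exact ⟨G, hG, fun G' hG' => GBAux.reducedGB_unique hr hG' hG⟩

end
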